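/- (Corollary 2: upper bound on K for IA with partial coordination.) Let m ≥ 1, n ≥ 1, and K ≥ 1 be natural numbers, set c = m + n and r = c mod 2, and let d̃ = (c − r)/4 > 0 as a rational number. Define the number of equations N_e = K·(K−1)·d̃² and the number of variables N_v = K·d̃·(c + n − 2d̃). Then N_e ≤ N_v if and only if K ≤ 3 + 4·(n + r)/(c − r) (as rational numbers). -/

import Mathlib

/-- Corollary 2 (upper bound on `K` for IA with partial coordination): with
`c = m + n`, `r = c mod 2`, `d̃ = (c - r)/4 > 0`, `N_e = K(K-1)d̃²` and
`N_v = K·d̃·(c + n - 2d̃)`, we have `N_e ≤ N_v` iff `K ≤ 3 + 4(n + r)/(c - r)`. -/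
theorem stmt_4 (m n K : ℕ) (hm : 1 ≤ m) (hn : 1 ≤ n) (hK : 1 ≤ K)
    (c : ℕ) (hc : c = m + n) (r : ℕ) (hr : r = c % 2)
    (dtil : ℚ) (hd : dtil = ((c : ℚ) - (r : ℚ)) / 4) (hdpos : 0 < dtil)
    (Ne Nv : ℚ) (hNe : Ne = (K : ℚ) * ((K : ℚ) - 1) * dtil ^ 2)
    (hNv : Nv = (K : ℚ) * dtil * ((c : ℚ) + (n : ℚ) - 2 * dtil)) :
    Ne ≤ Nv ↔ (K : ℚ) ≤ 3 + 4 * ((n : ℚ) + (r : ℚ)) / ((c : ℚ) - (r : ℚ)) := by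

  subst hNe hNv
  have hx : (0:ℚ) < (c:ℚ) - (r:ℚ) := by
    rw [hd] at hdpos; linarith
  have hKq : (1:ℚ) ≤ (K:ℚ) := by exact_mod_cast hK
  have hK0 : (0:ℚ) < (K:ℚ) := by linarith
  have hd4 : 4 * dtil = (c:ℚ) - (r:ℚ) := by rw [hd]; ring
  have hKd : 0 < (K:ℚ) * dtil := mul_pos hK0 hdpos
  have hmain : (K:ℚ) * ((K:ℚ) - 1) * dtil ^ 2 ≤ (K:ℚ) * dtil * ((c:ℚ) + (n:ℚ) - 2 * dtil)
      ↔ (K:ℚ) * dtil ≤ 3 * dtil + (n:ℚ) + (r:ℚ) := by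
    rw [show (K:ℚ) * ((K:ℚ) - 1) * dtil ^ 2 = ((K:ℚ) * dtil) * ((K:ℚ) * dtil - dtil) by ring]
    rw [mul_le_mul_iff_right₀ hKd]
    constructor <;> intro h <;> linarith
  rw [hmain, show (3:ℚ) + 4 * ((n:ℚ) + (r:ℚ)) / ((c:ℚ) - (r:ℚ))
      = (3 * ((c:ℚ) - (r:ℚ)) + 4 * ((n:ℚ) + (r:ℚ))) / ((c:ℚ) - (r:ℚ)) by
    field_simp, le_div_iff₀ hx, ← hd4,
    show (K:ℚ) * (4 * dtil) = 4 * ((K:ℚ) * dtil) by ring]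
  constructor <;> intro h <;> linarith
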